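/- Let ρ_AB = Σ_{e∈Fin n} p_e (ρ_e^A ⊗ E_e) be a density matrix on ℂ^m⊗ℂ^n and ρ_CD = Σ_{f∈Fin u} q_f (E_f ⊗ ρ_f^D) a density matrix on ℂ^u⊗ℂ^v, where each ρ_e^A, ρ_f^D is a density matrix, (p_e), (q_f) are probability vectors, and E_e = e_e e_e† (resp. E_f) denote the standard-basis rank-one projections on ℂ^n (resp. ℂ^u). If the products p_e q_f (e ∈ Fin n, f ∈ Fin u) are pairwise distinct, then N_H^b(ρ_AB⊗ρ_CD) = 0. -/

import Mathlib

open scoped Matrix Kronecker BigOperators ComplexOrder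
open Matrix

/-- The positive-semidefinite square root of a PSD matrix (0 if not PSD). -/
noncomputable def psdSqrt {N : Type*} [Fintype N] [DecidableEq N] (A : Matrix N N ℂ) :
    Matrix N N ℂ :=
  open scoped Classical in
  if h : A.PosSemidef then
    (h.1.eigenvectorUnitary : Matrix N N ℂ) *
      Matrix.diagonal ((↑) ∘ (Real.sqrt ∘ h.1.eigenvalues)) *
      (star h.1.eigenvectorUnitary : Matrix N N ℂ)
  else 0

/-- Squared Frobenius (Hilbert–Schmidt) norm: `‖X‖² = tr (Xᴴ X)`. -/
noncomputable def hsNormSq {N : Type*} [Fintype N] (X : Matrix N N ℂ) : ℝ :=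
  (Matrix.trace (Xᴴ * X)).re

/-- A density matrix: positive semidefinite with unit trace. -/
def IsDensity {N : Type*} [Fintype N] [DecidableEq N] (ρ : Matrix N N ℂ) : Prop :=
  ρ.PosSemidef ∧ ρ.trace = 1

/-- Standard inner product on `ℂ^N`. -/
noncomputable def cInner {N : Type*} [Fintype N] (x y : N → ℂ) : ℂ :=
  ∑ i, star (x i) * y i

/-- Outer product `ψ ψ†`. -/
noncomputable def outer {N : Type*} (ψ : N → ℂ) : Matrix N N ℂ :=
  Matrix.vecMulVec ψ (star ψ)

/-- The family of unit vectors of a rank-one von Neumann measurement: an orthonormal basis,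
indexed by the dimension. -/
def IsVNM {N : Type*} [Fintype N] [DecidableEq N] (u : N → N → ℂ) : Prop :=
  ∀ a b, cInner (u a) (u b) = if a = b then (1 : ℂ) else 0

/-- The rank-one projection `Π_h = u_h u_h†` of a measurement. -/
noncomputable def projOf {N : Type*} (u : N → N → ℂ) (h : N) : Matrix N N ℂ :=
  outer (u h)

/-- The measurement `{u_h u_h†}` fixes `σ`: `Σ_h Π_h σ Π_h = σ`. -/
def FixesVNM {N : Type*} [Fintype N] (u : N → N → ℂ) (σ : Matrix N N ℂ) : Prop :=
  ∑ h, projOf u h * σ * projOf u h = σ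

/-- Reduced state of the second factor: `(ρ_B)_{j j'} = Σ_i ρ_{(i,j),(i,j')}`. -/
noncomputable def redB {m n : ℕ} (ρ : Matrix (Fin m × Fin n) (Fin m × Fin n) ℂ) :
    Matrix (Fin n) (Fin n) ℂ :=
  Matrix.of fun j j' => ∑ i, ρ (i, j) (i, j')

/-- Reduced state of the first factor: `(ρ_C)_{k k'} = Σ_l ρ_{(k,l),(k',l)}`. -/
noncomputable def redC {u v : ℕ} (ρ : Matrix (Fin u × Fin v) (Fin u × Fin v) ℂ) :
    Matrix (Fin u) (Fin u) ℂ :=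
  Matrix.of fun k k' => ∑ l, ρ (k, l) (k', l)

/-- `I_m ⊗ P ⊗ I_v` acting on the middle two factors. -/
noncomputable def ampMid (m v : ℕ) {n u : ℕ} (P : Matrix (Fin n × Fin u) (Fin n × Fin u) ℂ) :
    Matrix ((Fin m × Fin n) × Fin u × Fin v) ((Fin m × Fin n) × Fin u × Fin v) ℂ :=
  Matrix.of fun p q =>
    (if p.1.1 = q.1.1 then (1 : ℂ) else 0) * P (p.1.2, p.2.1) (q.1.2, q.2.1) *
      (if p.2.2 = q.2.2 then (1 : ℂ) else 0)

/-- The map `Π^{BC}(X) = Σ_h (I_m ⊗ Π_h ⊗ I_v) X (I_m ⊗ Π_h ⊗ I_v)`. -/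
noncomputable def pinchBC {m n u v : ℕ} (w : (Fin n × Fin u) → (Fin n × Fin u) → ℂ)
    (X : Matrix ((Fin m × Fin n) × Fin u × Fin v) ((Fin m × Fin n) × Fin u × Fin v) ℂ) :
    Matrix ((Fin m × Fin n) × Fin u × Fin v) ((Fin m × Fin n) × Fin u × Fin v) ℂ :=
  ∑ h, ampMid m v (projOf w h) * X * ampMid m v (projOf w h)

/-- The measurement-induced nonbilocality `N_H^b(ρ_AB ⊗ ρ_CD)`. -/
noncomputable def NHb {m n u v : ℕ}
    (ρAB : Matrix (Fin m × Fin n) (Fin m × Fin n) ℂ)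
    (ρCD : Matrix (Fin u × Fin v) (Fin u × Fin v) ℂ) : ℝ :=
  sSup { r : ℝ | ∃ w : (Fin n × Fin u) → (Fin n × Fin u) → ℂ,
    IsVNM w ∧ FixesVNM w (redB ρAB ⊗ₖ redC ρCD) ∧
    r = hsNormSq (psdSqrt (ρAB ⊗ₖ ρCD) - pinchBC w (psdSqrt (ρAB ⊗ₖ ρCD))) }


lemma kron_conjT {a b : Type*} [Fintype a] [Fintype b] (A : Matrix a a ℂ) (B : Matrix b b ℂ) :
    (A ⊗ₖ B)ᴴ = Aᴴ ⊗ₖ Bᴴ := by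
  ext ⟨i, j⟩ ⟨k, l⟩
  simp [conjTranspose_apply, kroneckerMap_apply]

lemma kron_psd {a b : Type*} [Fintype a] [Fintype b] [DecidableEq a] [DecidableEq b]
    {A : Matrix a a ℂ} {B : Matrix b b ℂ} (hA : A.PosSemidef) (hB : B.PosSemidef) :
    (A ⊗ₖ B).PosSemidef := by
  exact hA.kronecker hB

lemma smul_psd {a : Type*} [Fintype a] {A : Matrix a a ℂ} (hA : A.PosSemidef) {c : ℝ}
    (hc : 0 ≤ c) : ((c : ℂ) • A).PosSemidef := by
  exact hA.smul (Complex.zero_le_real.mpr hc)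

lemma stdBasis_diag {a : Type*} [DecidableEq a] (e : a) :
    single e e (1 : ℂ) = Matrix.diagonal (fun i => if i = e then 1 else 0) := by
  ext i j
  simp only [single, of_apply, diagonal_apply]
  by_cases h1 : i = j <;> by_cases h2 : e = i <;> simp_all [eq_comm]

lemma stdBasis_psd {a : Type*} [DecidableEq a] [Fintype a] (e : a) :
    (single e e (1 : ℂ)).PosSemidef := by
  rw [stdBasis_diag]
  refine PosSemidef.diagonal fun i => ?_
  dsimp only
  split <;> simp

lemma ampMid_std {m v n u : ℕ} (g : Fin n × Fin u) :
    ampMid m v (single g g (1 : ℂ)) =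
      Matrix.diagonal (fun P => if (P.1.2, P.2.1) = g then 1 else 0) := by
  ext ⟨⟨a,b⟩,c,d⟩ ⟨⟨a',b'⟩,c',d'⟩
  simp only [ampMid, Matrix.of_apply, single, diagonal_apply, Prod.mk.injEq,
    Prod.ext_iff]
  by_cases h1 : a=a' <;> by_cases h2 : b=b' <;> by_cases h3 : c=c' <;> by_cases h4 : d=d' <;>
    by_cases h5 : (b,c)=g <;> simp_all [Prod.ext_iff] <;> aesop

lemma pinch_diag_fix {m n u v : ℕ}
    (X : Matrix ((Fin m × Fin n) × Fin u × Fin v) ((Fin m × Fin n) × Fin u × Fin v) ℂ)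
    (hX : ∀ P Q, (P.1.2, P.2.1) ≠ (Q.1.2, Q.2.1) → X P Q = 0) :
    ∑ g : Fin n × Fin u,
      ampMid m v (single g g (1 : ℂ)) * X * ampMid m v (single g g (1 : ℂ)) = X := by
  ext P Q
  rw [Matrix.sum_apply]
  simp only [ampMid_std, diagonal_mul, mul_diagonal]
  by_cases h : (P.1.2, P.2.1) = (Q.1.2, Q.2.1)
  · rw [Finset.sum_eq_single (P.1.2, P.2.1)]
    · rw [if_pos rfl, ← h, if_pos rfl]; ring
    · intro g _ hg
      rw [if_neg fun hh => hg hh.symm]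
      ring
    · intro hmem; exact absurd (Finset.mem_univ _) hmem
  · refine (Finset.sum_eq_zero fun g _ => ?_).trans (hX P Q h).symm
    by_cases h1 : (P.1.2, P.2.1) = g
    · rw [hX P Q h]; ring
    · rw [if_neg h1]; ring

lemma vnm_fix_diag {N : Type*} [Fintype N] [DecidableEq N] (d : N → ℂ)
    (hd : Function.Injective d) (w : N → N → ℂ) (hw : IsVNM w)
    (hfix : FixesVNM w (Matrix.diagonal d)) :
    ∃ π : Equiv.Perm N, ∀ h, projOf w h = single (π h) (π h) (1 : ℂ) := by
  classical
  -- entrywise form of the fixing condition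
  have hent : ∀ i j, (∑ h, (∑ k, d k * (star (w h k) * w h k)) * (w h i * star (w h j)))
      = Matrix.diagonal d i j := by
    intro i j
    have := congrFun (congrFun hfix i) j
    rw [Matrix.sum_apply] at this
    rw [← this]
    simp only [Finset.sum_mul]
    refine Finset.sum_congr rfl fun h _ => ?_
    simp only [projOf, outer, Matrix.mul_apply, vecMulVec_apply, Pi.star_apply,
      diagonal_apply]
    simp only [mul_ite, mul_zero, Finset.sum_ite_eq', Finset.mem_univ, if_pos]
    refine Finset.sum_congr rfl fun k _ => ?_
    ring
  set c : N → ℂ := fun h => ∑ k, d k * (star (w h k) * w h k) with hc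
  have heig : ∀ g i, d i * w g i = c g * w g i := by
    intro g i
    have h1 : ∑ j, Matrix.diagonal d i j * w g j = d i * w g i := by
      simp [diagonal_apply, ite_mul, Finset.sum_ite_eq]
    calc d i * w g i = ∑ j, Matrix.diagonal d i j * w g j := h1.symm
      _ = ∑ j, (∑ h, c h * (w h i * star (w h j))) * w g j := by
          refine Finset.sum_congr rfl fun j _ => ?_
          rw [hent i j]
      _ = ∑ h, c h * w h i * ∑ j, star (w h j) * w g j := by
          simp only [Finset.sum_mul, Finset.mul_sum]
          rw [Finset.sum_comm]
          exact Finset.sum_congr rfl fun h _ => Finset.sum_congr rfl fun j _ => by ring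
      _ = ∑ h, c h * w h i * (if h = g then 1 else 0) := by
          refine Finset.sum_congr rfl fun h _ => ?_
          rw [← hw h g]
          rfl
      _ = c g * w g i := by
          simp [mul_ite, Finset.sum_ite_eq']
  have hne : ∀ g, ∃ i, w g i ≠ 0 := by
    intro g
    by_contra hall
    push_neg at hall
    have := hw g g
    simp only [if_pos rfl, cInner] at this
    rw [Finset.sum_eq_zero (fun i _ => by rw [hall i, mul_zero])] at this
    exact zero_ne_one this
  choose π hπ using hne
  have hcg : ∀ g, c g = d (π g) := by
    intro g
    have := heig g (π g)
    exact (mul_right_cancel₀ (hπ g) this).symm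
  have hzero : ∀ g i, i ≠ π g → w g i = 0 := by
    intro g i hi
    by_contra hne0
    have h2 := heig g i
    rw [hcg g] at h2
    exact hi (hd (mul_right_cancel₀ hne0 h2))
  have hnorm : ∀ g, star (w g (π g)) * w g (π g) = 1 := by
    intro g
    have := hw g g
    simp only [if_pos rfl, cInner] at this
    rwa [Finset.sum_eq_single (π g)
      (fun i _ hi => by rw [hzero g i hi, mul_zero])
      (fun habs => absurd (Finset.mem_univ _) habs)] at this
  have hproj : ∀ g, projOf w g = single (π g) (π g) (1 : ℂ) := by
    intro g
    ext i j
    simp only [projOf, outer, vecMulVec_apply, Pi.star_apply, single, of_apply]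
    by_cases hi : i = π g <;> by_cases hj : j = π g
    · subst hi; subst hj
      rw [if_pos ⟨rfl, rfl⟩, mul_comm, hnorm g]
    · rw [hzero g j hj, star_zero, mul_zero, if_neg (fun hh => hj hh.2.symm)]
    · rw [hzero g i hi, zero_mul, if_neg (fun hh => hi hh.1.symm)]
    · rw [hzero g i hi, zero_mul, if_neg (fun hh => hi hh.1.symm)]
  have hinj : Function.Injective π := by
    intro g g' hgg'
    by_contra hne'
    have h0 := hw g g'
    rw [if_neg hne'] at h0
    simp only [cInner] at h0
    rw [Finset.sum_eq_single (π g)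
      (fun i _ hi => by rw [hzero g i hi, star_zero, zero_mul])
      (fun habs => absurd (Finset.mem_univ _) habs)] at h0
    exact (mul_ne_zero (star_ne_zero.mpr (hπ g)) (by rw [hgg']; exact hπ g')) h0
  exact ⟨Equiv.ofBijective π ((Finite.injective_iff_bijective).mp hinj), hproj⟩

lemma kron_block_mul {m n u v : ℕ}
    (A A' : Matrix (Fin m) (Fin m) ℂ) (B B' : Matrix (Fin v) (Fin v) ℂ)
    (e e' : Fin n) (f f' : Fin u) :
    ((A ⊗ₖ single e e (1:ℂ)) ⊗ₖ (single f f (1:ℂ) ⊗ₖ B)) *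
      ((A' ⊗ₖ single e' e' (1:ℂ)) ⊗ₖ (single f' f' (1:ℂ) ⊗ₖ B')) =
    if e = e' ∧ f = f' then
      ((A * A') ⊗ₖ single e e (1:ℂ)) ⊗ₖ (single f f (1:ℂ) ⊗ₖ (B * B'))
    else 0 := by
  rw [← mul_kronecker_mul, ← mul_kronecker_mul, ← mul_kronecker_mul]
  by_cases he : e = e'
  · subst he
    by_cases hf : f = f'
    · subst hf
      rw [if_pos ⟨rfl, rfl⟩, single_mul_single_same, single_mul_single_same, mul_one]
    · rw [if_neg (fun hh => hf hh.2), single_mul_single_of_ne 1 f f f' hf 1,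
        zero_kronecker, kronecker_zero]
  · rw [if_neg (fun hh => he hh.1), single_mul_single_of_ne 1 e e e' he 1,
      kronecker_zero, zero_kronecker]

lemma sum_kron_mul {m n u v : ℕ}
    (a a' : Fin n → Fin u → Matrix (Fin m) (Fin m) ℂ)
    (b b' : Fin u → Matrix (Fin v) (Fin v) ℂ) :
    (∑ e, ∑ f, (a e f ⊗ₖ single e e (1:ℂ)) ⊗ₖ (single f f (1:ℂ) ⊗ₖ b f)) *
      (∑ e, ∑ f, (a' e f ⊗ₖ single e e (1:ℂ)) ⊗ₖ (single f f (1:ℂ) ⊗ₖ b' f)) =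
    ∑ e, ∑ f, ((a e f * a' e f) ⊗ₖ single e e (1:ℂ)) ⊗ₖ
      (single f f (1:ℂ) ⊗ₖ (b f * b' f)) := by
  simp only [Finset.sum_mul, Finset.mul_sum]
  refine Finset.sum_congr rfl fun e _ => ?_
  refine Finset.sum_congr rfl fun f _ => ?_
  rw [Finset.sum_eq_single e]
  · rw [Finset.sum_eq_single f]
    · rw [kron_block_mul, if_pos ⟨rfl, rfl⟩]
    · intro f' _ hf'
      rw [kron_block_mul, if_neg (fun hh => hf' hh.2)]
    · intro habs; exact absurd (Finset.mem_univ _) habs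
  · intro e' _ he'
    refine Finset.sum_eq_zero fun f' _ => ?_
    rw [kron_block_mul, if_neg (fun hh => he' hh.1)]
  · intro habs; exact absurd (Finset.mem_univ _) habs

lemma sum_kron {a b ι κ : Type*} [Fintype ι] [Fintype κ]
    (X : ι → Matrix a a ℂ) (Y : κ → Matrix b b ℂ) :
    (∑ e, X e) ⊗ₖ (∑ f, Y f) = ∑ e, ∑ f, X e ⊗ₖ Y f := by
  ext ⟨i, j⟩ ⟨k, l⟩
  simp only [kroneckerMap_apply, Matrix.sum_apply, Finset.sum_mul, Finset.mul_sum]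
  exact Finset.sum_comm

open scoped MatrixOrder in
lemma psdSqrt_eq_cfc {N : Type*} [Fintype N] [DecidableEq N] {A : Matrix N N ℂ}
    (hA : A.PosSemidef) : psdSqrt A = CFC.sqrt A := by
  rw [CFC.sqrt_eq_real_sqrt A hA.nonneg, cfcₙ_eq_cfc, hA.1.cfc_eq, IsHermitian.cfc]
  unfold psdSqrt
  rw [dif_pos hA]
  simp

open scoped MatrixOrder in
lemma psdSqrt_unique {N : Type*} [Fintype N] [DecidableEq N] {A B : Matrix N N ℂ}
    (hA : A.PosSemidef) (hB : B.PosSemidef) (h : B * B = A) : psdSqrt A = B := by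
  rw [psdSqrt_eq_cfc hA]; exact CFC.sqrt_unique h hB.nonneg

open scoped MatrixOrder in
lemma psdSqrt_psd {N : Type*} [Fintype N] [DecidableEq N] {A : Matrix N N ℂ}
    (hA : A.PosSemidef) : (psdSqrt A).PosSemidef := by
  rw [psdSqrt_eq_cfc hA]; exact (CFC.sqrt_nonneg A).posSemidef

lemma psdSqrt_mul_self {N : Type*} [Fintype N] [DecidableEq N] {A : Matrix N N ℂ}
    (hA : A.PosSemidef) : psdSqrt A * psdSqrt A = A := by
  open scoped MatrixOrder in
  rw [psdSqrt_eq_cfc hA]; exact CFC.sqrt_mul_sqrt_self A hA.nonneg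

/-- For classical-quantum inputs
`ρ_AB = Σ_e p_e (ρ_e^A ⊗ E_e)` and `ρ_CD = Σ_f q_f (E_f ⊗ ρ_f^D)` whose products
`p_e q_f` are pairwise distinct, the nonbilocality vanishes. -/
theorem stmt8 {m n u v : ℕ}
    (ρA : Fin n → Matrix (Fin m) (Fin m) ℂ) (hρA : ∀ e, IsDensity (ρA e))
    (ρD : Fin u → Matrix (Fin v) (Fin v) ℂ) (hρD : ∀ f, IsDensity (ρD f))
    (p : Fin n → ℝ) (q : Fin u → ℝ)
    (hp : ∀ e, 0 ≤ p e) (hq : ∀ f, 0 ≤ q f)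
    (hp1 : ∑ e, p e = 1) (hq1 : ∑ f, q f = 1)
    (hdist : ∀ e f e' f', p e * q f = p e' * q f' → (e, f) = (e', f'))
    (ρAB : Matrix (Fin m × Fin n) (Fin m × Fin n) ℂ)
    (ρCD : Matrix (Fin u × Fin v) (Fin u × Fin v) ℂ)
    (hAB : ρAB = ∑ e, ((p e : ℝ) : ℂ) • (ρA e ⊗ₖ Matrix.single e e (1 : ℂ)))
    (hCD : ρCD = ∑ f, ((q f : ℝ) : ℂ) • (Matrix.single f f (1 : ℂ) ⊗ₖ ρD f)) :
    NHb ρAB ρCD = 0 := by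
  classical
  -- reduced states are diagonal
  have hredB : redB ρAB = Matrix.diagonal (fun e => ((p e : ℝ) : ℂ)) := by
    ext j j'
    simp only [redB, of_apply, hAB, Matrix.sum_apply, Matrix.smul_apply, kroneckerMap_apply,
      smul_eq_mul]
    rw [Finset.sum_comm]
    have hstep : ∀ e, ∑ i, (p e : ℂ) * ((ρA e) i i * single e e (1 : ℂ) j j')
        = (p e : ℂ) * single e e (1 : ℂ) j j' := by
      intro e
      have htr : ∑ i, (ρA e) i i = 1 := (hρA e).2
      calc ∑ i, (p e : ℂ) * ((ρA e) i i * single e e (1 : ℂ) j j')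
          = ((p e : ℂ) * single e e (1 : ℂ) j j') * ∑ i, (ρA e) i i := by
            rw [Finset.mul_sum]
            exact Finset.sum_congr rfl fun i _ => by ring
        _ = (p e : ℂ) * single e e (1 : ℂ) j j' := by rw [htr, mul_one]
    rw [Finset.sum_congr rfl fun e _ => hstep e]
    by_cases h : j = j'
    · subst h
      simp [single, diagonal_apply, mul_ite, Finset.sum_ite_eq', and_self]
    · rw [diagonal_apply_ne _ h]
      refine Finset.sum_eq_zero fun e _ => ?_
      rw [single_apply_of_ne, mul_zero]
      rintro ⟨rfl, rfl⟩
      exact h rfl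
  have hredC : redC ρCD = Matrix.diagonal (fun f => ((q f : ℝ) : ℂ)) := by
    ext k k'
    simp only [redC, of_apply, hCD, Matrix.sum_apply, Matrix.smul_apply, kroneckerMap_apply,
      smul_eq_mul]
    rw [Finset.sum_comm]
    have hstep : ∀ f, ∑ l, (q f : ℂ) * (single f f (1 : ℂ) k k' * (ρD f) l l)
        = (q f : ℂ) * single f f (1 : ℂ) k k' := by
      intro f
      have htr : ∑ l, (ρD f) l l = 1 := (hρD f).2
      calc ∑ l, (q f : ℂ) * (single f f (1 : ℂ) k k' * (ρD f) l l)
          = ((q f : ℂ) * single f f (1 : ℂ) k k') * ∑ l, (ρD f) l l := by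
            rw [Finset.mul_sum]
            exact Finset.sum_congr rfl fun l _ => by ring
        _ = (q f : ℂ) * single f f (1 : ℂ) k k' := by rw [htr, mul_one]
    rw [Finset.sum_congr rfl fun f _ => hstep f]
    by_cases h : k = k'
    · subst h
      simp [single, diagonal_apply, mul_ite, Finset.sum_ite_eq', and_self]
    · rw [diagonal_apply_ne _ h]
      refine Finset.sum_eq_zero fun f _ => ?_
      rw [single_apply_of_ne, mul_zero]
      rintro ⟨rfl, rfl⟩
      exact h rfl
  set D : Fin n × Fin u → ℂ := fun g => ((p g.1 * q g.2 : ℝ) : ℂ) with hD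
  have hσ : redB ρAB ⊗ₖ redC ρCD = Matrix.diagonal D := by
    rw [hredB, hredC, diagonal_kronecker_diagonal]
    congr 1
    funext g
    simp [hD]
  have hDinj : Function.Injective D := by
    intro g g' hgg'
    have hgg2 : ((p g.1 * q g.2 : ℝ) : ℂ) = ((p g'.1 * q g'.2 : ℝ) : ℂ) := hgg'
    have : p g.1 * q g.2 = p g'.1 * q g'.2 := by exact_mod_cast hgg2
    have := hdist g.1 g.2 g'.1 g'.2 this
    exact Prod.ext (congrArg Prod.fst this) (congrArg Prod.snd this)
  -- the square root
  set S : Matrix ((Fin m × Fin n) × Fin u × Fin v) ((Fin m × Fin n) × Fin u × Fin v) ℂ :=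
    ∑ e, ∑ f, (((((Real.sqrt (p e * q f) : ℝ) : ℂ) • psdSqrt (ρA e)) ⊗ₖ
      single e e (1 : ℂ)) ⊗ₖ (single f f (1 : ℂ) ⊗ₖ psdSqrt (ρD f))) with hS
  have hkron : ρAB ⊗ₖ ρCD = ∑ e, ∑ f, ((((((p e * q f : ℝ)) : ℂ) • ρA e) ⊗ₖ
      single e e (1 : ℂ)) ⊗ₖ (single f f (1 : ℂ) ⊗ₖ ρD f)) := by
    rw [hAB, hCD, sum_kron]
    refine Finset.sum_congr rfl fun e _ => Finset.sum_congr rfl fun f _ => ?_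
    simp only [smul_kronecker, kronecker_smul, smul_smul]
    norm_cast
    rw [mul_comm]
  have hS2 : S * S = ρAB ⊗ₖ ρCD := by
    rw [hS, sum_kron_mul, hkron]
    refine Finset.sum_congr rfl fun e _ => Finset.sum_congr rfl fun f _ => ?_
    have h1 : ((((Real.sqrt (p e * q f) : ℝ) : ℂ) • psdSqrt (ρA e)) *
        ((((Real.sqrt (p e * q f) : ℝ)) : ℂ) • psdSqrt (ρA e)))
        = (((p e * q f : ℝ)) : ℂ) • ρA e := by
      rw [smul_mul_assoc, mul_smul_comm, smul_smul, ← Complex.ofReal_mul,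
        Real.mul_self_sqrt (mul_nonneg (hp e) (hq f)), psdSqrt_mul_self (hρA e).1]
    have h2 : psdSqrt (ρD f) * psdSqrt (ρD f) = ρD f := psdSqrt_mul_self (hρD f).1
    rw [h1, h2]
  have hSpsd : S.PosSemidef := by
    rw [hS]
    refine Finset.sum_induction _ _ (fun x y hx hy => hx.add hy) Matrix.PosSemidef.zero
      fun e _ => ?_
    refine Finset.sum_induction _ _ (fun x y hx hy => hx.add hy) Matrix.PosSemidef.zero
      fun f _ => ?_
    rw [smul_kronecker, smul_kronecker]
    exact smul_psd (kron_psd (kron_psd (psdSqrt_psd (hρA e).1) (stdBasis_psd e))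
      (kron_psd (stdBasis_psd f) (psdSqrt_psd (hρD f).1))) (Real.sqrt_nonneg _)
  have hTpsd : (ρAB ⊗ₖ ρCD).PosSemidef := by
    rw [← hS2]
    nth_rewrite 1 [← hSpsd.isHermitian.eq]
    exact posSemidef_conjTranspose_mul_self _
  have hsqrtEq : psdSqrt (ρAB ⊗ₖ ρCD) = S := by
    exact psdSqrt_unique hTpsd hSpsd hS2
  have hSsupp : ∀ P Q, (P.1.2, P.2.1) ≠ (Q.1.2, Q.2.1) → S P Q = 0 := by
    intro P Q hne
    rw [hS]
    simp only [Matrix.sum_apply]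
    refine Finset.sum_eq_zero fun e _ => Finset.sum_eq_zero fun f _ => ?_
    have hcase : P.1.2 ≠ Q.1.2 ∨ P.2.1 ≠ Q.2.1 := by
      by_contra hcon
      push_neg at hcon
      exact hne (Prod.ext hcon.1 hcon.2)
    rcases hcase with hc | hc
    · have : single e e (1 : ℂ) P.1.2 Q.1.2 = 0 := by
        rw [single_apply_of_ne]
        rintro ⟨rfl, h2⟩
        exact hc h2
      show _ * _ = (0 : ℂ)
      simp only [kroneckerMap_apply, this, mul_zero, zero_mul]
    · have : single f f (1 : ℂ) P.2.1 Q.2.1 = 0 := by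
        rw [single_apply_of_ne]
        rintro ⟨rfl, h2⟩
        exact hc h2
      show _ * _ = (0 : ℂ)
      simp only [kroneckerMap_apply, this, mul_zero, zero_mul]
  -- pinching with any permuted standard measurement fixes S
  have hpinchstd : ∀ (π : Equiv.Perm (Fin n × Fin u)) (w : (Fin n × Fin u) → (Fin n × Fin u) → ℂ),
      (∀ h, projOf w h = single (π h) (π h) (1 : ℂ)) →
      pinchBC (m := m) (v := v) w S = S := by
    intro π w hproj
    unfold pinchBC
    simp only [hproj]
    rw [Equiv.sum_comp π (fun g => ampMid m v (single g g (1 : ℂ)) * S *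
      ampMid m v (single g g (1 : ℂ)))]
    exact pinch_diag_fix S hSsupp
  have hproj0 : ∀ h : Fin n × Fin u,
      projOf (fun (g : Fin n × Fin u) (i : Fin n × Fin u) => if i = g then (1 : ℂ) else 0) h
        = single h h (1 : ℂ) := by
    intro h
    ext i j
    simp only [projOf, outer, vecMulVec_apply, Pi.star_apply, single, of_apply]
    by_cases hi : i = h <;> by_cases hj : j = h
    · subst hi; subst hj; simp
    · subst hi; simp [hj, Ne.symm hj]
    · subst hj; simp [hi, Ne.symm hi]
    · simp [hi, hj, Ne.symm hi]
  unfold NHb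
  have hset : { r : ℝ | ∃ w : (Fin n × Fin u) → (Fin n × Fin u) → ℂ,
      IsVNM w ∧ FixesVNM w (redB ρAB ⊗ₖ redC ρCD) ∧
      r = hsNormSq (psdSqrt (ρAB ⊗ₖ ρCD) - pinchBC w (psdSqrt (ρAB ⊗ₖ ρCD))) } = {0} := by
    apply Set.eq_singleton_iff_unique_mem.mpr
    constructor
    · refine ⟨fun (g : Fin n × Fin u) (i : Fin n × Fin u) => if i = g then (1 : ℂ) else 0,
        ?_, ?_, ?_⟩
      · intro a b
        simp [cInner, apply_ite (star : ℂ → ℂ), ite_mul, Finset.sum_ite_eq', eq_comm]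
      · unfold FixesVNM
        simp only [hproj0]
        rw [hσ]
        ext i j
        rw [Matrix.sum_apply]
        simp only [stdBasis_diag, diagonal_mul_diagonal]
        by_cases hij : i = j
        · subst hij
          simp only [diagonal_apply_eq]
          simp [ite_mul, mul_ite, Finset.sum_ite_eq']
        · simp [diagonal_apply_ne _ hij]
      · rw [hsqrtEq, hpinchstd (Equiv.refl _) _ (by simpa using hproj0), sub_self]
        simp [hsNormSq]
    · rintro r ⟨w, hw, hfix, rfl⟩
      rw [hσ] at hfix
      obtain ⟨π, hproj⟩ := vnm_fix_diag D hDinj w hw hfix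
      rw [hsqrtEq, hpinchstd π w hproj, sub_self]
      simp [hsNormSq]
  rw [hset]
  exact csSup_singleton 0
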